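/- Decryption correctness of the ElGamal type group ring public key cryptosystem: let S be an arbitrary ring, let u and v be units of S, let n₁, n₂, k be natural numbers, and let r ∈ S be a message. Set A₁ = u^{n₁}, A₂ = v^{n₂}, C₁ = v^{k}, and C₂ = (r * A₁) * A₂^{k}. Then (C₂ * ((C₁)^{n₂})⁻¹) * A₁⁻¹ = r, where the inverses are taken in the unit group of S. -/

import Mathlib

/-- Decryption correctness of the ElGamal type group ring
public key cryptosystem: let `S` be an arbitrary ring, let `u` and `v` be
units of `S`, let `n₁, n₂, k` be natural numbers, and let `r ∈ S` be a
message. Set `A₁ = u^{n₁}`, `A₂ = v^{n₂}`, `C₁ = v^{k}`, and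
`C₂ = (r * A₁) * A₂^{k}`. Then `(C₂ * ((C₁)^{n₂})⁻¹) * A₁⁻¹ = r`. -/
theorem elgamal_grpkc_decryption {S : Type*} [Ring S]
    (u v : Sˣ) (n₁ n₂ k : ℕ) (r : S)
    (A₁ A₂ C₁ : Sˣ) (hA₁ : A₁ = u ^ n₁) (hA₂ : A₂ = v ^ n₂) (hC₁ : C₁ = v ^ k)
    (C₂ : S) (hC₂ : C₂ = (r * (A₁ : S)) * ((A₂ ^ k : Sˣ) : S)) :
    (C₂ * (((C₁ ^ n₂)⁻¹ : Sˣ) : S)) * ((A₁⁻¹ : Sˣ) : S) = r := by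
  subst hC₂ hA₂ hC₁
  have h : (v ^ n₂) ^ k = (v ^ k) ^ n₂ := by rw [← pow_mul, ← pow_mul, Nat.mul_comm]
  rw [h]
  simp only [mul_assoc, Units.mul_inv_cancel_left, Units.mul_inv, mul_one]
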